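/- Let 0 < δ < α < 1 and let n ≥ 1. Let F_1, …, F_n : ℝ → ℝ be nondecreasing functions with values in [0, 1], and let p_1, …, p_n be real numbers such that F_i(p_i) ≥ 1 - δ for every i. Let F = (1/n)·∑_{i=1}^n F_i, let T be the ⌈n(1-α+δ)⌉-th order statistic of (p_1, …, p_n), and let q = inf{x ∈ ℝ : F(x) ≥ 1 - α}. Then F(T) ≥ (1-α+δ)(1-δ) > 1 - α, and consequently q ≤ T. -/

import Mathlib

private lemma count_le_sorted (l : List ℝ) (k : ℕ) (hs : l.Pairwise (· ≤ ·)) (hk : k ≤ l.length)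
    (hk1 : 1 ≤ k) : k ≤ l.countP (fun x => decide (x ≤ l.getD (k-1) 0)) := by
  have hkl : k - 1 < l.length := lt_of_lt_of_le (Nat.sub_lt hk1 one_pos) hk
  set T := l.getD (k-1) 0 with hTd
  have hTg : T = l.get ⟨k-1, hkl⟩ := by rw [hTd, List.getD_eq_getElem]; rfl
  have h1 : ∀ a ∈ l.take k, a ≤ T := by
    intro a ha
    rw [List.mem_iff_get] at ha
    obtain ⟨i, hi⟩ := ha
    have hil : (i : ℕ) < k := by
      have h := i.isLt; simp [List.length_take] at h; omega
    have hgt : (l.take k).get i = l.get ⟨i, lt_of_lt_of_le hil hk⟩ := by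
      simp [List.getElem_take]
    rw [← hi, hgt, hTg]
    exact hs.rel_get_of_le (by simpa using Nat.le_sub_one_of_lt hil)
  calc k = (l.take k).length := by simp [hk]
    _ = (l.take k).countP (fun x => decide (x ≤ T)) := by
        rw [eq_comm, List.countP_eq_length]; intro a ha; simpa using h1 a ha
    _ ≤ l.countP (fun x => decide (x ≤ T)) := by
        conv_rhs => rw [← List.take_append_drop k l]
        rw [List.countP_append]; omega

/-- The `k`-th order statistic (1-indexed, counting multiplicity) of a tuple of reals,
with junk value `0` if `k` is out of range. -/
noncomputable def orderStat {n : ℕ} (p : Fin n → ℝ) (k : ℕ) : ℝ :=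
  (Multiset.sort (Multiset.map p Finset.univ.val) (· ≤ ·)).getD (k - 1) 0

/-- Lemma A.1 of the paper: for nondecreasing `[0,1]`-valued functions `F_1, …, F_n`,
points `p_i` with `F_i (p_i) ≥ 1 - δ`, the mixture `F = (1/n) ∑ F_i`, the
`⌈n(1-α+δ)⌉`-th order statistic `T` of the `p_i`, and `q = inf {x | F x ≥ 1 - α}`,
one has `F T ≥ (1-α+δ)(1-δ) > 1 - α` and hence `q ≤ T`. -/
theorem stmt4 (n : ℕ) (hn : 1 ≤ n) (α δ : ℝ) (hδ0 : 0 < δ) (hδα : δ < α) (hα1 : α < 1)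
    (F : Fin n → ℝ → ℝ) (hmono : ∀ i, Monotone (F i))
    (hrange : ∀ i x, F i x ∈ Set.Icc (0 : ℝ) 1)
    (p : Fin n → ℝ) (hp : ∀ i, 1 - δ ≤ F i (p i))
    (Fbar : ℝ → ℝ) (hFbar : ∀ x, Fbar x = (1 / (n : ℝ)) * ∑ i, F i x)
    (T : ℝ) (hT : T = orderStat p ⌈(n : ℝ) * (1 - α + δ)⌉₊)
    (q : EReal) (hq : q = sInf (Real.toEReal '' {x : ℝ | 1 - α ≤ Fbar x})) :
    (1 - α + δ) * (1 - δ) ≤ Fbar T ∧ 1 - α < (1 - α + δ) * (1 - δ) ∧ q ≤ (T : EReal) := by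
  have hn0 : (0:ℝ) < n := by exact_mod_cast hn
  set k := ⌈(n : ℝ) * (1 - α + δ)⌉₊ with hkdef
  have hk1 : 1 ≤ k := by
    have : (0:ℝ) < (n : ℝ) * (1 - α + δ) := by nlinarith
    exact Nat.ceil_pos.2 this
  have hkn : k ≤ n := Nat.ceil_le.2 (by nlinarith)
  set l := Multiset.sort (Multiset.map p Finset.univ.val) (· ≤ ·) with hldef
  have hlen : l.length = n := by
    rw [hldef, Multiset.length_sort, Multiset.card_map]; simp
  have hsort : l.Pairwise (· ≤ ·) := Multiset.pairwise_sort _ _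
  have hTl : T = l.getD (k-1) 0 := hT
  -- counting
  have hcount : k ≤ (Finset.univ.filter (fun i => p i ≤ T)).card := by
    have h := count_le_sorted l k hsort (by omega) hk1
    rw [← hTl] at h
    have hperm : (l : Multiset ℝ) = Multiset.map p Finset.univ.val := Multiset.sort_eq _ _
    have : l.countP (fun x => decide (x ≤ T))
        = Multiset.countP (fun x => x ≤ T) (Multiset.map p Finset.univ.val) := by
      rw [← hperm]; rfl
    rw [this] at h
    rw [Multiset.countP_map] at h
    simpa [Finset.card, Finset.filter] using h
  set S := Finset.univ.filter (fun i => p i ≤ T) with hS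
  have hsum1 : (k : ℝ) * (1 - δ) ≤ ∑ i ∈ S, F i T := by
    have hδ1 : (0:ℝ) ≤ 1 - δ := by linarith
    calc (k : ℝ) * (1 - δ) ≤ (S.card : ℝ) * (1 - δ) := by
          apply mul_le_mul_of_nonneg_right _ hδ1; exact_mod_cast hcount
      _ ≤ ∑ i ∈ S, F i T := by
          rw [← nsmul_eq_mul]
          apply Finset.card_nsmul_le_sum
          intro i hi
          have hpi : p i ≤ T := by simpa [hS] using hi
          exact le_trans (hp i) (hmono i hpi)
  have hsum2 : ∑ i ∈ S, F i T ≤ ∑ i, F i T := by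
    apply Finset.sum_le_sum_of_subset_of_nonneg (Finset.subset_univ S)
    intro i _ _; exact (hrange i T).1
  have hmain : (1 - α + δ) * (1 - δ) ≤ Fbar T := by
    rw [hFbar]
    have hceil : (n : ℝ) * (1 - α + δ) ≤ (k : ℝ) := Nat.le_ceil _
    have hδ1 : (0:ℝ) ≤ 1 - δ := by linarith
    have : (n : ℝ) * ((1 - α + δ) * (1 - δ)) ≤ ∑ i, F i T := by
      calc (n : ℝ) * ((1 - α + δ) * (1 - δ)) = ((n:ℝ) * (1 - α + δ)) * (1 - δ) := by ring
        _ ≤ (k : ℝ) * (1 - δ) := mul_le_mul_of_nonneg_right hceil hδ1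
        _ ≤ ∑ i ∈ S, F i T := hsum1
        _ ≤ ∑ i, F i T := hsum2
    rw [div_mul_eq_mul_div, one_mul, le_div_iff₀ hn0]
    linarith [this]
  have hstrict : 1 - α < (1 - α + δ) * (1 - δ) := by nlinarith
  refine ⟨hmain, hstrict, ?_⟩
  rw [hq]
  apply sInf_le
  exact ⟨T, by simp only [Set.mem_setOf_eq]; linarith, rfl⟩
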